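/- For every n ≥ 1 and x ∈ [0,1], the ratio of the fourth to the second central moment of the Kantorovich operator satisfies K_n((t−x)^4;x) / K_n((t−x)^2;x) ≤ 3(n+2)/(n+1)^2. -/

import Mathlib

open MeasureTheory Set

noncomputable def kantorovich (n : ℕ) (f : ℝ → ℝ) (x : ℝ) : ℝ :=
  ((n : ℝ) + 1) * ∑ k ∈ Finset.range (n + 1),
    (n.choose k : ℝ) * x ^ k * (1 - x) ^ (n - k) *
      ∫ t in ((k : ℝ) / ((n : ℝ) + 1))..(((k : ℝ) + 1) / ((n : ℝ) + 1)), f t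

noncomputable def supNorm (f : ℝ → ℝ) : ℝ :=
  sSup {y | ∃ x ∈ Icc (0:ℝ) 1, y = |f x|}

noncomputable def omega1 (f : ℝ → ℝ) (h : ℝ) : ℝ :=
  sSup {d | ∃ s ∈ Icc (0:ℝ) 1, ∃ t ∈ Icc (0:ℝ) 1, |s - t| ≤ h ∧ d = |f s - f t|}

noncomputable def omega2 (f : ℝ → ℝ) (h : ℝ) : ℝ :=
  sSup {d | ∃ t δ : ℝ, 0 < δ ∧ δ ≤ h ∧ t - δ ∈ Icc (0:ℝ) 1 ∧ t + δ ∈ Icc (0:ℝ) 1 ∧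
    d = |f (t + δ) - 2 * f t + f (t - δ)|}

lemma sum_desc (n j : ℕ) (x y : ℝ) :
    ∑ k ∈ Finset.range (n+1), (n.choose k : ℝ) * (k.descFactorial j : ℝ) * x^k * y^(n-k)
      = (n.descFactorial j : ℝ) * x^j * (x+y)^(n-j) := by
  rcases le_or_gt j n with hj | hj
  · have key : ∀ k, j ≤ k → k ≤ n →
        (n.choose k : ℝ) * (k.descFactorial j : ℝ) = (n.descFactorial j : ℝ) * ((n-j).choose (k-j) : ℝ) := by
      intro k hjk hkn
      have := Nat.choose_mul (n := n) hjk
      have h1 := Nat.descFactorial_eq_factorial_mul_choose k j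
      have h2 := Nat.descFactorial_eq_factorial_mul_choose n j
      rw [h1, h2, ← Nat.cast_mul, ← Nat.cast_mul]
      congr 1
      rw [Nat.mul_comm (j.factorial) (k.choose j), ← Nat.mul_assoc, this]
      ring
    rw [← Finset.sum_range_add_sum_Ico _ (hj.trans (Nat.le_succ n))]
    have h0 : ∑ k ∈ Finset.range j, (n.choose k : ℝ) * (k.descFactorial j : ℝ) * x^k * y^(n-k) = 0 := by
      apply Finset.sum_eq_zero
      intro k hk
      simp only [Finset.mem_range] at hk
      rw [Nat.descFactorial_eq_zero_iff_lt.2 hk]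
      simp
    rw [h0, zero_add]
    rw [Finset.sum_Ico_eq_sum_range]
    have hrw : n + 1 - j = (n - j) + 1 := by omega
    rw [hrw]
    rw [add_pow]
    rw [Finset.mul_sum]
    apply Finset.sum_congr rfl
    intro m hm
    simp only [Finset.mem_range] at hm
    rw [key (j + m) (by omega) (by omega)]
    have e1 : j + m - j = m := by omega
    have e2 : n - (j + m) = (n - j) - m := by omega
    rw [e1, e2, pow_add]
    ring
  · have h0 : ∑ k ∈ Finset.range (n+1), (n.choose k : ℝ) * (k.descFactorial j : ℝ) * x^k * y^(n-k) = 0 := by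
      apply Finset.sum_eq_zero
      intro k hk
      simp only [Finset.mem_range] at hk
      rw [Nat.descFactorial_eq_zero_iff_lt.2 (by omega)]
      simp
    rw [h0, Nat.descFactorial_eq_zero_iff_lt.2 hj]
    simp

lemma sum_desc' (n j : ℕ) (x : ℝ) :
    ∑ k ∈ Finset.range (n+1), (n.choose k : ℝ) * (k.descFactorial j : ℝ) * x^k * (1-x)^(n-k)
      = (n.descFactorial j : ℝ) * x^j := by
  rw [sum_desc]
  simp

lemma dc1 (k : ℕ) : ((k.descFactorial 1 : ℕ) : ℝ) = k := by
  simp [Nat.descFactorial]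

lemma dc2 (k : ℕ) : ((k.descFactorial 2 : ℕ) : ℝ) = k * (k - 1) := by
  rcases k with _ | k <;> simp [Nat.descFactorial] <;> push_cast <;> ring

lemma dc3 (k : ℕ) : ((k.descFactorial 3 : ℕ) : ℝ) = k * (k - 1) * (k - 2) := by
  rcases k with _ | _ | k <;> simp [Nat.descFactorial] <;> push_cast <;> ring

lemma dc4 (k : ℕ) : ((k.descFactorial 4 : ℕ) : ℝ) = k * (k - 1) * (k - 2) * (k - 3) := by
  rcases k with _ | _ | _ | k <;> simp [Nat.descFactorial] <;> push_cast <;> ring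

lemma int_pow (p : ℕ) (x a b : ℝ) :
    (∫ t in a..b, (t - x) ^ p) = ((b - x) ^ (p + 1) - (a - x) ^ (p + 1)) / (p + 1) := by
  rw [intervalIntegral.integral_comp_sub_right (fun t => t ^ p) x, integral_pow]

lemma K2_eq (n : ℕ) (x : ℝ) :
    kantorovich n (fun t => (t - x) ^ 2) x
      = (((n:ℝ) - 1) * x * (1 - x) + 1/3) / ((n:ℝ) + 1) ^ 2 := by
  have hc : ((n:ℝ) + 1) ≠ 0 := by positivity
  unfold kantorovich
  have expand : ∀ k ∈ Finset.range (n+1),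
      (n.choose k : ℝ) * x ^ k * (1 - x) ^ (n - k) *
        ∫ t in ((k : ℝ) / ((n : ℝ) + 1))..(((k : ℝ) + 1) / ((n : ℝ) + 1)), (t - x) ^ 2
      = ((1/3)/((n:ℝ)+1)^3 - x/((n:ℝ)+1)^2 + x^2/((n:ℝ)+1)) *
            ((n.choose k : ℝ) * (k.descFactorial 0 : ℝ) * x^k * (1-x)^(n-k))
        + (2/((n:ℝ)+1)^3 - 2*x/((n:ℝ)+1)^2) *
            ((n.choose k : ℝ) * (k.descFactorial 1 : ℝ) * x^k * (1-x)^(n-k))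
        + (1/((n:ℝ)+1)^3) *
            ((n.choose k : ℝ) * (k.descFactorial 2 : ℝ) * x^k * (1-x)^(n-k)) := by
    intro k _
    rw [int_pow, Nat.descFactorial_zero, dc1, dc2]
    push_cast
    field_simp
    ring
  rw [Finset.sum_congr rfl expand, Finset.sum_add_distrib, Finset.sum_add_distrib,
    ← Finset.mul_sum, ← Finset.mul_sum, ← Finset.mul_sum, sum_desc', sum_desc', sum_desc',
    Nat.descFactorial_zero, dc1, dc2]
  push_cast
  field_simp
  ring

set_option maxHeartbeats 1000000 in
lemma K4_eq (n : ℕ) (x : ℝ) :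
    kantorovich n (fun t => (t - x) ^ 4) x
      = (3*(n:ℝ)^2*x^2*(1-x)^2 + 5*(n:ℝ)*x*(1-x)*(1-2*x)^2 + x^4 - 2*x^3 + 2*x^2 - x + 1/5)
          / ((n:ℝ) + 1) ^ 4 := by
  have hc : ((n:ℝ) + 1) ≠ 0 := by positivity
  unfold kantorovich
  have expand : ∀ k ∈ Finset.range (n+1),
      (n.choose k : ℝ) * x ^ k * (1 - x) ^ (n - k) *
        ∫ t in ((k : ℝ) / ((n : ℝ) + 1))..(((k : ℝ) + 1) / ((n : ℝ) + 1)), (t - x) ^ 4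
      = ((1/5)/((n:ℝ)+1)^5 - x/((n:ℝ)+1)^4 + 2*x^2/((n:ℝ)+1)^3 - 2*x^3/((n:ℝ)+1)^2 + x^4/((n:ℝ)+1)) *
            ((n.choose k : ℝ) * (k.descFactorial 0 : ℝ) * x^k * (1-x)^(n-k))
        + (6/((n:ℝ)+1)^5 - 14*x/((n:ℝ)+1)^4 + 12*x^2/((n:ℝ)+1)^3 - 4*x^3/((n:ℝ)+1)^2) *
            ((n.choose k : ℝ) * (k.descFactorial 1 : ℝ) * x^k * (1-x)^(n-k))
        + (15/((n:ℝ)+1)^5 - 18*x/((n:ℝ)+1)^4 + 6*x^2/((n:ℝ)+1)^3) *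
            ((n.choose k : ℝ) * (k.descFactorial 2 : ℝ) * x^k * (1-x)^(n-k))
        + (8/((n:ℝ)+1)^5 - 4*x/((n:ℝ)+1)^4) *
            ((n.choose k : ℝ) * (k.descFactorial 3 : ℝ) * x^k * (1-x)^(n-k))
        + (1/((n:ℝ)+1)^5) *
            ((n.choose k : ℝ) * (k.descFactorial 4 : ℝ) * x^k * (1-x)^(n-k)) := by
    intro k _
    rw [int_pow, Nat.descFactorial_zero, dc1, dc2, dc3, dc4]
    push_cast
    field_simp
    ring
  rw [Finset.sum_congr rfl expand, Finset.sum_add_distrib, Finset.sum_add_distrib,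
    Finset.sum_add_distrib, Finset.sum_add_distrib,
    ← Finset.mul_sum, ← Finset.mul_sum, ← Finset.mul_sum, ← Finset.mul_sum, ← Finset.mul_sum,
    sum_desc', sum_desc', sum_desc', sum_desc', sum_desc',
    Nat.descFactorial_zero, dc1, dc2, dc3, dc4]
  push_cast
  field_simp
  ring

lemma core_ineq (N X : ℝ) (hN : 1 ≤ N) (h0 : 0 ≤ X) (h4 : X ≤ 1/4) :
    3*N^2*X^2 + 5*N*X*(1-4*X) + X^2 - X + 1/5 ≤ 3*(N+2)*((N-1)*X + 1/3) := by
  have h4' : 0 ≤ 1/4 - X := by linarith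
  have hN0 : 0 ≤ N := by linarith
  nlinarith [mul_nonneg (mul_nonneg (mul_nonneg hN0 hN0) h0) h4',
    mul_nonneg (mul_nonneg hN0 h0) h4', mul_nonneg h0 h4',
    mul_nonneg (mul_nonneg hN0 h0) h0, mul_nonneg h0 h0,
    mul_nonneg (mul_nonneg (sub_nonneg.2 hN) h0) h4',
    mul_nonneg hN0 h0]

theorem kantorovich_fourth_to_second_moment_ratio (n : ℕ) (hn : 1 ≤ n) (x : ℝ)
    (hx : x ∈ Icc (0:ℝ) 1) :
    kantorovich n (fun t => (t - x) ^ 4) x / kantorovich n (fun t => (t - x) ^ 2) x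
      ≤ 3 * ((n : ℝ) + 2) / ((n : ℝ) + 1) ^ 2 := by
  obtain ⟨hx0, hx1⟩ := hx
  have hN : (1:ℝ) ≤ (n:ℝ) := by exact_mod_cast hn
  have hc : (0:ℝ) < (n:ℝ) + 1 := by linarith
  have hX0 : 0 ≤ x * (1 - x) := mul_nonneg hx0 (by linarith)
  have hX4 : x * (1 - x) ≤ 1/4 := by nlinarith [sq_nonneg (1 - 2*x)]
  rw [K2_eq, K4_eq]
  have h2pos : 0 < (((n:ℝ) - 1) * x * (1 - x) + 1/3) / ((n:ℝ) + 1) ^ 2 := by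
    apply div_pos _ (by positivity)
    have : 0 ≤ ((n:ℝ) - 1) * (x * (1 - x)) := mul_nonneg (by linarith) hX0
    nlinarith
  rw [div_le_iff₀ h2pos]
  have key := core_ineq (n:ℝ) (x * (1-x)) hN hX0 hX4
  have hexp : 3*((n:ℝ))^2*(x*(1-x))^2 + 5*(n:ℝ)*(x*(1-x))*(1-4*(x*(1-x))) + (x*(1-x))^2
      - (x*(1-x)) + 1/5
      = 3*(n:ℝ)^2*x^2*(1-x)^2 + 5*(n:ℝ)*x*(1-x)*(1-2*x)^2 + x^4 - 2*x^3 + 2*x^2 - x + 1/5 := by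
    ring
  rw [hexp] at key
  rw [div_le_iff₀ (by positivity : (0:ℝ) < ((n:ℝ)+1)^4)]
  have hrhs : 3 * ((n:ℝ) + 2) / ((n:ℝ) + 1) ^ 2 *
        ((((n:ℝ) - 1) * x * (1 - x) + 1/3) / ((n:ℝ) + 1) ^ 2) * ((n:ℝ)+1)^4
      = 3 * ((n:ℝ) + 2) * (((n:ℝ) - 1) * (x * (1 - x)) + 1/3) := by
    field_simp
  rw [hrhs]
  linarith [key]
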